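/- Let Ψ : B → B be an isomorphism between two Lie algebra lifts (B,[·,·]₁) and (B,[·,·]₂) of L which induces the identity map on L = B/π^k B. Then Ψ = Id + ψ∘φ∘λ for some linear map φ : L̄ → L̄, and the corresponding difference 2-forms satisfy ⟨·,·⟩₂ = ⟨·,·⟩₁ − dφ; i.e., they are cohomologous in H²(L̄, ad). -/

import Mathlib

open Pointwise

/-- `Rmod R π m` is the quotient ring `R/π^m R`. -/
abbrev Rmod (R : Type) [CommRing R] (π : R) (m : ℕ) : Type :=
  R ⧸ Ideal.span {π ^ m}

section Setup

variable (R : Type) [CommRing R] (π : R) (k : ℕ)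
variable (B : Type) [AddCommGroup B] [Module (Rmod R π (k + 1)) B]

/-- The image of `π` in `R_{k+1}`. -/
noncomputable abbrev pbar : Rmod R π (k + 1) := Ideal.Quotient.mk _ π

/-- The submodule `π^k B` of `B`. -/
noncomputable abbrev pikB : Submodule (Rmod R π (k + 1)) B :=
  (pbar R π k) ^ k • (⊤ : Submodule (Rmod R π (k + 1)) B)

/-- The submodule `π B` of `B`. -/
noncomputable abbrev piB : Submodule (Rmod R π (k + 1)) B :=
  (pbar R π k) • (⊤ : Submodule (Rmod R π (k + 1)) B)

/-- `L = B/π^k B`, the reduction of `B` to a module over `R_k`. -/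
noncomputable abbrev Lred := B ⧸ pikB R π k B

/-- `L̄ = B/πB`, the reduction of `B` to a vector space over the residue field. -/
noncomputable abbrev Lbar := B ⧸ piB R π k B

/-- The reduction map `mod : B → L = B/π^k B`. -/
noncomputable abbrev modk : B →ₗ[Rmod R π (k + 1)] Lred R π k B :=
  (pikB R π k B).mkQ

/-- The reduction map `λ : B → L̄ = B/πB`. -/
noncomputable abbrev lam : B →ₗ[Rmod R π (k + 1)] Lbar R π k B :=
  (piB R π k B).mkQ

/-- `ψ : L̄ → B`, the map sending `x mod πB` to `π^k x`; its (corestriction to `π^k B`)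
is the inverse of the canonical isomorphism `χ : π^k B → L̄`. -/
noncomputable def psi : Lbar R π k B →ₗ[Rmod R π (k + 1)] B :=
  Submodule.liftQ _ ((pbar R π k) ^ k • (LinearMap.id : B →ₗ[Rmod R π (k + 1)] B))
    (by
      intro x hx
      rw [← SetLike.mem_coe, Submodule.coe_pointwise_smul, Set.mem_smul_set] at hx
      obtain ⟨y, -, rfl⟩ := hx
      have h0 : (pbar R π k) ^ k * pbar R π k = 0 := by
        rw [← pow_succ, ← map_pow, Ideal.Quotient.eq_zero_iff_mem]
        exact Ideal.mem_span_singleton_self _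
      simp only [LinearMap.mem_ker, LinearMap.smul_apply, LinearMap.id_apply, smul_smul]
      rw [h0, zero_smul])

@[simp] theorem psi_apply (x : B) :
    psi R π k B (lam R π k B x) = ((pbar R π k) ^ k) • x := rfl

end Setup



section Helpers

variable (R : Type) [CommRing R] (π : R) (k : ℕ)
variable (B : Type) [AddCommGroup B] [Module (Rmod R π (k + 1)) B]

theorem pbar_smul_Lbar (z : Lbar R π k B) : (pbar R π k) • z = 0 := by
  obtain ⟨x, rfl⟩ := Submodule.mkQ_surjective _ z
  show (pbar R π k) • Submodule.Quotient.mk x = 0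
  rw [← Submodule.Quotient.mk_smul, Submodule.Quotient.mk_eq_zero]
  exact Submodule.smul_mem_pointwise_smul x (pbar R π k) ⊤ trivial

theorem pbark_smul_Lbar (hk : 1 ≤ k) (z : Lbar R π k B) : (pbar R π k) ^ k • z = 0 := by
  obtain ⟨k', rfl⟩ := Nat.exists_eq_add_of_le hk
  have h : (pbar R π (1 + k')) ^ (1 + k') = pbar R π (1 + k') * (pbar R π (1 + k')) ^ k' := by
    rw [pow_add, pow_one]
  rw [h, mul_smul, pbar_smul_Lbar]

theorem lam_psi (hk : 1 ≤ k) (z : Lbar R π k B) : lam R π k B (psi R π k B z) = 0 := by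
  obtain ⟨x, rfl⟩ := Submodule.mkQ_surjective _ z
  rw [psi_apply, map_smul, pbark_smul_Lbar R π k B hk]

theorem pbar_pow_cancel [IsDomain R] (hπ : π ≠ 0) (a : Rmod R π (k + 1))
    (h : (pbar R π k) ^ k * a = 0) : ∃ d, a = (pbar R π k) * d := by
  obtain ⟨r, rfl⟩ := Ideal.Quotient.mk_surjective a
  rw [← map_pow, ← map_mul, Ideal.Quotient.eq_zero_iff_mem,
    Ideal.mem_span_singleton'] at h
  obtain ⟨c, hc⟩ := h
  refine ⟨Ideal.Quotient.mk _ c, ?_⟩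
  rw [← map_mul]
  congr 1
  have : π ^ k * (π * c) = π ^ k * r := by
    rw [← hc]; ring
  exact (mul_left_cancel₀ (pow_ne_zero k hπ) this).symm

theorem psi_inj [IsDomain R] [Module.Free (Rmod R π (k + 1)) B] (hπ : π ≠ 0)
    {z : Lbar R π k B} (h : psi R π k B z = 0) : z = 0 := by
  obtain ⟨x, rfl⟩ := Submodule.mkQ_surjective _ z
  rw [psi_apply] at h
  set b := Module.Free.chooseBasis (Rmod R π (k + 1)) B with hb
  have hcoord : ∀ i, (pbar R π k) ^ k * b.repr x i = 0 := by
    intro i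
    have := congrArg (fun y => b.repr y i) h
    simpa [map_smul, smul_eq_mul] using this
  have hd : ∀ i, ∃ d, b.repr x i = (pbar R π k) * d := fun i =>
    pbar_pow_cancel R π k hπ _ (hcoord i)
  choose d hdd using hd
  show lam R π k B x = 0
  rw [Submodule.mkQ_apply, Submodule.Quotient.mk_eq_zero]
  have hx : x = (pbar R π k) • (b.repr x).sum fun i c => d i • b i := by
    conv_lhs => rw [← b.linearCombination_repr x]
    rw [Finsupp.smul_sum]
    rw [Finsupp.linearCombination_apply, Finsupp.sum, Finsupp.sum]
    refine Finset.sum_congr rfl fun i _ => ?_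
    rw [smul_smul, ← hdd i]
  rw [hx]
  exact Submodule.smul_mem_pointwise_smul _ (pbar R π k) ⊤ trivial

end Helpers

/-- If `Ψ : B → B` is an isomorphism between the two Lie algebra lifts
`(B,[·,·]₁)` and `(B,[·,·]₂)` of `L` inducing the identity on `L = B/π^k B`, then
`Ψ = Id + ψ∘φ∘λ` for some linear map `φ : L̄ → L̄`, and the difference 2-forms satisfy
`⟨·,·⟩₂ = ⟨·,·⟩₁ − dφ`; i.e. they are cohomologous in `H²(L̄, ad)`. -/
theorem stmt_15 (R : Type) [CommRing R] [IsDomain R] [IsDiscreteValuationRing R]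
    (π : R) (hπ : Irreducible π) (k : ℕ) (hk : 1 ≤ k)
    (B : Type) [AddCommGroup B] [Module (Rmod R π (k + 1)) B]
    [Module.Free (Rmod R π (k + 1)) B] [Module.Finite (Rmod R π (k + 1)) B]
    (brL : Lred R π k B →ₗ[Rmod R π (k + 1)] Lred R π k B →ₗ[Rmod R π (k + 1)] Lred R π k B)
    (haltL : ∀ v, brL v v = 0)
    (hjacL : ∀ x y z : Lred R π k B, brL (brL x y) z + brL (brL y z) x + brL (brL z x) y = 0)
    (br0 br1 br2 : B →ₗ[Rmod R π (k + 1)] B →ₗ[Rmod R π (k + 1)] B)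
    (halt0 : ∀ v, br0 v v = 0) (halt1 : ∀ v, br1 v v = 0) (halt2 : ∀ v, br2 v v = 0)
    (hjac0 : ∀ x y z : B, br0 (br0 x y) z + br0 (br0 y z) x + br0 (br0 z x) y = 0)
    (hjac1 : ∀ x y z : B, br1 (br1 x y) z + br1 (br1 y z) x + br1 (br1 z x) y = 0)
    (hjac2 : ∀ x y z : B, br2 (br2 x y) z + br2 (br2 y z) x + br2 (br2 z x) y = 0)
    (hlift0 : ∀ x y : B, modk R π k B (br0 x y) = brL (modk R π k B x) (modk R π k B y))
    (hlift1 : ∀ x y : B, modk R π k B (br1 x y) = brL (modk R π k B x) (modk R π k B y))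
    (hlift2 : ∀ x y : B, modk R π k B (br2 x y) = brL (modk R π k B x) (modk R π k B y))
    (brb : Lbar R π k B →ₗ[Rmod R π (k + 1)] Lbar R π k B →ₗ[Rmod R π (k + 1)] Lbar R π k B)
    (hbrb : ∀ x y : B, lam R π k B (br0 x y) = brb (lam R π k B x) (lam R π k B y))
    (form1 form2 : Lbar R π k B →ₗ[Rmod R π (k + 1)] Lbar R π k B →ₗ[Rmod R π (k + 1)]
      Lbar R π k B)
    (hform1alt : ∀ v, form1 v v = 0) (hform2alt : ∀ v, form2 v v = 0)
    (hbr1 : ∀ x y : B, br1 x y = br0 x y + psi R π k B (form1 (lam R π k B x) (lam R π k B y)))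
    (hbr2 : ∀ x y : B, br2 x y = br0 x y + psi R π k B (form2 (lam R π k B x) (lam R π k B y)))
    (Ψ : B ≃ₗ[Rmod R π (k + 1)] B)
    (hΨbr : ∀ x y : B, br2 (Ψ x) (Ψ y) = Ψ (br1 x y))
    (hΨid : ∀ x : B, modk R π k B (Ψ x) = modk R π k B x) :
    ∃ φ : Lbar R π k B →ₗ[Rmod R π (k + 1)] Lbar R π k B,
      (∀ x : B, Ψ x = x + psi R π k B (φ (lam R π k B x))) ∧
      (∀ u v : Lbar R π k B,
        form2 u v = form1 u v - (-φ (brb u v) + brb u (φ v) - brb v (φ u))) := by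
  classical
  have hπ0 : π ≠ 0 := hπ.ne_zero
  have hmem_smul : ∀ (a : Rmod R π (k+1)) (x : B),
      x ∈ a • (⊤ : Submodule (Rmod R π (k+1)) B) → ∃ s : B, a • s = x := by
    intro a x hx
    rw [← SetLike.mem_coe, Submodule.coe_pointwise_smul, Set.mem_smul_set] at hx
    obtain ⟨s, -, hs⟩ := hx
    exact ⟨s, hs⟩
  -- Ψ - id lands in π^k B
  have hδ : ∀ x : B, ∃ w : B, (pbar R π k) ^ k • w = Ψ x - x := by
    intro x
    refine hmem_smul _ _ ?_
    have h0 : modk R π k B (Ψ x - x) = 0 := by rw [map_sub, hΨid, sub_self]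
    rwa [Submodule.mkQ_apply, Submodule.Quotient.mk_eq_zero] at h0
  choose w hw using hδ
  set b := Module.Free.chooseBasis (Rmod R π (k + 1)) B with hbdef
  set φ₀ : B →ₗ[Rmod R π (k + 1)] Lbar R π k B :=
    b.constr ℕ (fun i => lam R π k B (w (b i))) with hφ₀
  have hψφ₀ : ∀ x : B, psi R π k B (φ₀ x) = Ψ x - x := by
    have heq : (psi R π k B) ∘ₗ φ₀ = (Ψ : B →ₗ[Rmod R π (k + 1)] B) - LinearMap.id := by
      apply b.ext
      intro i
      rw [LinearMap.comp_apply, hφ₀, Module.Basis.constr_basis, psi_apply, hw]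
      simp
    intro x
    have := LinearMap.congr_fun heq x
    simpa using this
  have hker : piB R π k B ≤ LinearMap.ker φ₀ := by
    intro x hx
    obtain ⟨s, hs⟩ := hmem_smul _ _ hx
    rw [LinearMap.mem_ker, ← hs, map_smul, pbar_smul_Lbar]
  refine ⟨Submodule.liftQ _ φ₀ hker, ?_, ?_⟩
  case _ =>
    intro x
    rw [show (Submodule.liftQ _ φ₀ hker) (lam R π k B x) = φ₀ x from rfl, hψφ₀]
    abel
  set φ := Submodule.liftQ _ φ₀ hker with hφdef
  have key : ∀ x : B, Ψ x = x + psi R π k B (φ (lam R π k B x)) := by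
    intro x
    rw [show φ (lam R π k B x) = φ₀ x from rfl, hψφ₀]
    abel
  -- injectivity of psi
  have hψinj : ∀ a c : Lbar R π k B, psi R π k B a = psi R π k B c → a = c := by
    intro a c h
    have h0 : psi R π k B (a - c) = 0 := by rw [map_sub, h, sub_self]
    exact sub_eq_zero.mp (psi_inj R π k B hπ0 h0)
  -- brb is alternating / antisymmetric
  have hbrb_alt : ∀ z : Lbar R π k B, brb z z = 0 := by
    intro z
    obtain ⟨a, rfl⟩ := Submodule.mkQ_surjective _ z
    rw [show (Submodule.mkQ _ : B →ₗ[Rmod R π (k+1)] Lbar R π k B) a = lam R π k B a from rfl,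
      ← hbrb, halt0, map_zero]
  have hbrb_anti : ∀ a c : Lbar R π k B, brb a c = - brb c a := by
    intro a c
    have h := hbrb_alt (a + c)
    simp only [map_add, LinearMap.add_apply, hbrb_alt, zero_add, add_zero] at h
    rw [add_comm] at h
    exact eq_neg_of_add_eq_zero_left h
  intro u v
  obtain ⟨x, rfl⟩ := Submodule.mkQ_surjective _ u
  obtain ⟨y, rfl⟩ := Submodule.mkQ_surjective _ v
  have hux : (Submodule.mkQ _ : B →ₗ[Rmod R π (k+1)] Lbar R π k B) x = lam R π k B x := rfl
  rw [hux, show (Submodule.mkQ _ : B →ₗ[Rmod R π (k+1)] Lbar R π k B) y = lam R π k B y from rfl]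
  set u := lam R π k B x with hu
  set v := lam R π k B y with hv
  obtain ⟨w1, hw1⟩ := Submodule.mkQ_surjective (piB R π k B) (φ u)
  obtain ⟨w2, hw2⟩ := Submodule.mkQ_surjective (piB R π k B) (φ v)
  have hw1' : psi R π k B (φ u) = (pbar R π k) ^ k • w1 := by rw [← hw1]; rfl
  have hw2' : psi R π k B (φ v) = (pbar R π k) ^ k • w2 := by rw [← hw2]; rfl
  have hw1l : lam R π k B w1 = φ u := hw1
  have hw2l : lam R π k B w2 = φ v := hw2
  have hkk : (pbar R π k) ^ k * (pbar R π k) ^ k = 0 := by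
    have h0 : (pbar R π k) ^ (k + 1) = 0 := by
      rw [← map_pow, Ideal.Quotient.eq_zero_iff_mem]
      exact Ideal.mem_span_singleton_self _
    have hkk' : k + k = (k + 1) + (k - 1) := by omega
    rw [← pow_add, hkk', pow_add, h0, zero_mul]
  -- the four bilinear cross terms
  have t1 : br0 x (psi R π k B (φ v)) = psi R π k B (brb u (φ v)) := by
    rw [hw2', map_smul, ← hw2l, ← hbrb]; rfl
  have t2 : br0 (psi R π k B (φ u)) y = psi R π k B (brb (φ u) v) := by
    rw [hw1', map_smul, LinearMap.smul_apply, ← hw1l, ← hbrb]; rfl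
  have t3 : br0 (psi R π k B (φ u)) (psi R π k B (φ v)) = 0 := by
    rw [hw1', hw2', map_smul, map_smul, LinearMap.smul_apply, smul_smul, hkk, zero_smul]
  have l1 : lam R π k B (x + psi R π k B (φ u)) = u := by
    rw [map_add, lam_psi R π k B hk, add_zero]
  have l2 : lam R π k B (y + psi R π k B (φ v)) = v := by
    rw [map_add, lam_psi R π k B hk, add_zero]
  have h1 : br2 (Ψ x) (Ψ y) = br0 x y + psi R π k B (brb u (φ v))
      + psi R π k B (brb (φ u) v) + psi R π k B (form2 u v) := by
    rw [key x, key y, hbr2, l1, l2]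
    simp only [map_add, LinearMap.add_apply]
    rw [t1, t2, t3]
    abel
  have l3 : lam R π k B (br1 x y) = brb u v := by
    rw [hbr1, map_add, lam_psi R π k B hk, add_zero, hbrb]
  have h2 : Ψ (br1 x y) = br0 x y + psi R π k B (form1 u v)
      + psi R π k B (φ (brb u v)) := by
    rw [key (br1 x y), l3, hbr1]
  have E' : br0 x y + psi R π k B (brb u (φ v)) + psi R π k B (brb (φ u) v)
      + psi R π k B (form2 u v)
      = br0 x y + psi R π k B (form1 u v) + psi R π k B (φ (brb u v)) := by
    rw [← h1, ← h2, hΨbr]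
  have E'' : psi R π k B (brb u (φ v) + brb (φ u) v + form2 u v)
      = psi R π k B (form1 u v + φ (brb u v)) := by
    rw [map_add, map_add, map_add]
    have h' : br0 x y + (psi R π k B (brb u (φ v)) + psi R π k B (brb (φ u) v)
        + psi R π k B (form2 u v))
        = br0 x y + (psi R π k B (form1 u v) + psi R π k B (φ (brb u v))) := by
      calc br0 x y + (psi R π k B (brb u (φ v)) + psi R π k B (brb (φ u) v)
            + psi R π k B (form2 u v))
          = br0 x y + psi R π k B (brb u (φ v)) + psi R π k B (brb (φ u) v)
            + psi R π k B (form2 u v) := by abel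
        _ = br0 x y + psi R π k B (form1 u v) + psi R π k B (φ (brb u v)) := E'
        _ = _ := by abel
    exact add_left_cancel h'
  have E : brb u (φ v) + brb (φ u) v + form2 u v = form1 u v + φ (brb u v) :=
    hψinj _ _ E''
  have E2 : form2 u v = form1 u v + φ (brb u v) - brb u (φ v) - brb (φ u) v := by
    rw [← E]; abel
  rw [E2, hbrb_anti (φ u) v]
  abel
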